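/- Let n = 2^k with k ≥ 2 and let Ω : F₂' → (Z_n)^n be the homomorphism given by the n/2 horizontal invariants h⁰, ..., h^{n/2−1} and the n/2 vertical invariants v⁰, ..., v^{n/2−1}. Then the image of Ω is a subgroup of (Z_n)^n of order exactly 2·(n/2)^n. -/

import Mathlib

/-- The free group on two generators `x = of true`, `y = of false`. -/
abbrev F2 := FreeGroup Bool
/-- The generator `x`. -/
def xx : F2 := FreeGroup.of true
/-- The generator `y`. -/
def yy : F2 := FreeGroup.of false
/-- The ring of Laurent polynomials `ℤ[X^{±1}, Y^{±1}]`. -/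
abbrev L := AddMonoidAlgebra ℤ (ℤ × ℤ)
/-- The monomial `X^i Y^j`. -/
noncomputable def mono (i j : ℤ) : L := AddMonoidAlgebra.single (i, j) 1
/-- Total exponent of `x` in a word of `F2`. -/
def expx (u : F2) : ℤ :=
  Multiplicative.toAdd (FreeGroup.lift (fun b => Multiplicative.ofAdd (if b then (1 : ℤ) else 0)) u)
/-- Total exponent of `y` in a word of `F2`. -/
def expy (u : F2) : ℤ :=
  Multiplicative.toAdd (FreeGroup.lift (fun b => Multiplicative.ofAdd (if b then (0 : ℤ) else 1)) u)

lemma zval_sub_le {n c d : ℕ} [NeZero n] (h : d ≤ c) (hc : c < n) :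
    ((c : ZMod n) - (d : ZMod n)).val = c - d := by
  rw [← Nat.cast_sub h, ZMod.val_cast_of_lt (by omega)]

lemma zval_sub_lt {n c d : ℕ} [NeZero n] (h : c < d) (hd : d < n) :
    ((c : ZMod n) - (d : ZMod n)).val = n + c - d := by
  have h1 : ((n + c - d : ℕ) : ZMod n) = (c : ZMod n) - d := by
    rw [Nat.cast_sub (by omega)]
    push_cast
    rw [ZMod.natCast_self]
    ring
  rw [← h1, ZMod.val_cast_of_lt (by omega)]

lemma step_eval {n m a b : ℕ} [NeZero n] (hn : n = 2 * m) (ha : a < m) (hb : b < m) :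
    ((if ((a : ZMod n) - (b : ZMod n)).val < m then (1 : ZMod n) else -1) -
      if ((a : ZMod n) - ((b + 1 : ℕ) : ZMod n)).val < m then (1 : ZMod n) else -1)
      = if b = a then 2 else 0 := by
  have hnpos : 0 < n := Nat.pos_of_ne_zero (NeZero.ne n)
  have hm : 0 < m := by omega
  rcases lt_trichotomy a b with h | h | h
  · rw [zval_sub_lt h (by omega), zval_sub_lt (by omega) (by omega),
      if_neg (by omega), if_neg (by omega), sub_self, if_neg (by omega)]
  · subst h
    rw [zval_sub_le le_rfl (by omega), zval_sub_lt (by omega) (by omega),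
      if_pos (by omega), if_neg (by omega), if_pos rfl, sub_neg_eq_add]
    norm_num
  · rw [zval_sub_le h.le (by omega), zval_sub_le (by omega) (by omega),
      if_pos (by omega), if_pos (by omega), sub_self, if_neg (by omega)]

lemma expx_yy_zpow (c : ℤ) : expx (yy ^ c) = 0 := by
  simp [expx, yy, map_zpow, toAdd_zpow]

lemma expy_yy_zpow (c : ℤ) : expy (yy ^ c) = c := by
  simp [expy, yy, map_zpow, toAdd_zpow]

lemma expx_xx_zpow (c : ℤ) : expx (xx ^ c) = c := by
  simp [expx, xx, map_zpow, toAdd_zpow]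

lemma expy_xx_zpow (c : ℤ) : expy (xx ^ c) = 0 := by
  simp [expy, xx, map_zpow, toAdd_zpow]

def prodHom {m n' : ℕ} (π : ZMod n' →+* ZMod 2) (i0 : Fin m) :
    ((Fin m → ZMod n') × (Fin m → ZMod n')) →+ ((Fin m → ZMod 2) × (Fin m → ZMod 2)) where
  toFun w := (fun i => π (w.1 i) - π (w.1 i0), fun i => π (w.2 i) - π (w.1 i0))
  map_zero' := by
    refine Prod.ext ?_ ?_ <;> funext i <;> simp
  map_add' a b := by
    refine Prod.ext ?_ ?_ <;> funext i <;>
      simp [Prod.fst_add, Prod.snd_add, Pi.add_apply, map_add] <;> ring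

@[simp] lemma prodHom_apply {m n' : ℕ} (π : ZMod n' →+* ZMod 2) (i0 : Fin m)
    (w : (Fin m → ZMod n') × (Fin m → ZMod n')) :
    prodHom π i0 w = (fun i => π (w.1 i) - π (w.1 i0), fun i => π (w.2 i) - π (w.1 i0)) := rfl

def evalHom {m : ℕ} (i0 : Fin m) : ((Fin m → ZMod 2) × (Fin m → ZMod 2)) →+ ZMod 2 where
  toFun p := p.1 i0
  map_zero' := rfl
  map_add' _ _ := rfl

@[simp] lemma evalHom_apply {m : ℕ} (i0 : Fin m) (p : (Fin m → ZMod 2) × (Fin m → ZMod 2)) :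
    evalHom i0 p = p.1 i0 := rfl

lemma card_eq_range_mul_ker {G H : Type*} [AddGroup G] [AddGroup H] (f : G →+ H) :
    Nat.card G = Nat.card f.range * Nat.card f.ker := by
  rw [AddSubgroup.card_eq_card_quotient_mul_card_addSubgroup f.ker]
  congr 1
  exact Nat.card_congr (QuotientAddGroup.quotientKerEquivRange f).toEquiv

open scoped commutatorElement

/-- For `n = 2^k`, `k ≥ 2`, the homomorphism
`Ω : F₂' → (Z_n)^n` given by the `n/2` horizontal invariants `h⁰,…,h^{n/2-1}`
and the `n/2` vertical invariants `v⁰,…,v^{n/2-1}` has image of order exactly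
`2·(n/2)^n`. -/
theorem omega_image_order
    (W : commutator F2 → L)
    (hadd : ∀ z w : commutator F2, W (z * w) = W z + W w)
    (hcomm : ∀ h : ⁅xx, yy⁆ ∈ commutator F2, W ⟨⁅xx, yy⁆, h⟩ = 1)
    (hconj : ∀ (u : F2) (z : commutator F2) (h : u * ↑z * u⁻¹ ∈ commutator F2),
      W ⟨u * ↑z * u⁻¹, h⟩ = mono (expx u) (expy u) * W z)
    (k : ℕ) (hk : 2 ≤ k)
    (Ω : commutator F2 →
      (Fin (2 ^ (k - 1)) → ZMod (2 ^ k)) × (Fin (2 ^ (k - 1)) → ZMod (2 ^ k)))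
    (hΩ : ∀ z : commutator F2, Ω z =
      (fun (i : Fin (2 ^ (k - 1))) => Finsupp.sum (W z).coeff fun p a =>
        if (((p.2 : ZMod (2 ^ k)) - ((i : ℕ) : ZMod (2 ^ k)))).val < 2 ^ (k - 1)
        then (a : ZMod (2 ^ k)) else -(a : ZMod (2 ^ k)),
       fun (i : Fin (2 ^ (k - 1))) => Finsupp.sum (W z).coeff fun p a =>
        if (((p.1 : ZMod (2 ^ k)) - ((i : ℕ) : ZMod (2 ^ k)))).val < 2 ^ (k - 1)
        then (a : ZMod (2 ^ k)) else -(a : ZMod (2 ^ k)))) :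
    Nat.card (Set.range Ω) = 2 * (2 ^ (k - 1)) ^ (2 ^ k) := by

  have hk0 : k ≠ 0 := by omega
  have hm1 : 0 < 2 ^ (k - 1) := by positivity
  have hnm : (2:ℕ) ^ k = 2 * 2 ^ (k - 1) := by
    conv_lhs => rw [show k = (k - 1) + 1 by omega]
    rw [pow_succ']
  haveI : NeZero (2 ^ k) := ⟨by positivity⟩
  set π := ZMod.castHom (dvd_pow_self 2 hk0) (ZMod 2) with hπdef
  set i0 : Fin (2 ^ (k - 1)) := ⟨0, hm1⟩ with hi0def
  -- basic W facts
  have hW1 : W 1 = 0 := by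
    have h := hadd 1 1
    rw [one_mul] at h
    have h2 : W 1 + 0 = W 1 + W 1 := by rw [add_zero]; exact h
    exact (add_left_cancel h2).symm
  have hWinv : ∀ z : commutator F2, W z⁻¹ = -W z := by
    intro z
    have h := hadd z z⁻¹
    rw [mul_inv_cancel, hW1] at h
    exact eq_neg_of_add_eq_zero_right h.symm
  have hz0mem : ⁅xx, yy⁆ ∈ commutator F2 :=
    Subgroup.commutator_mem_commutator (Subgroup.mem_top _) (Subgroup.mem_top _)
  let z₀ : commutator F2 := ⟨⁅xx, yy⁆, hz0mem⟩
  have hWz₀ : W z₀ = 1 := hcomm hz0mem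
  have hconjmem : ∀ u : F2, u * (z₀ : F2) * u⁻¹ ∈ commutator F2 := fun u =>
    Subgroup.Normal.conj_mem inferInstance _ z₀.2 u
  let cj : F2 → commutator F2 := fun u => ⟨u * (z₀ : F2) * u⁻¹, hconjmem u⟩
  have hWcj : ∀ u : F2, W (cj u) = mono (expx u) (expy u) := by
    intro u
    exact (hconj u z₀ (hconjmem u)).trans (by rw [hWz₀, mul_one])

  let genH : Fin (2 ^ (k - 1)) → commutator F2 := fun i =>
    cj (yy ^ ((i : ℕ) : ℤ)) * (cj (yy ^ (((i : ℕ) : ℤ) - 1)))⁻¹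
  let genV : Fin (2 ^ (k - 1)) → commutator F2 := fun i =>
    cj (xx ^ ((i : ℕ) : ℤ)) * (cj (xx ^ (((i : ℕ) : ℤ) - 1)))⁻¹
  have hWgenH : ∀ i : Fin (2 ^ (k - 1)), (W (genH i)).coeff =
      Finsupp.single ((0 : ℤ), ((i : ℕ) : ℤ)) (1 : ℤ) -
        Finsupp.single ((0 : ℤ), ((i : ℕ) : ℤ) - 1) (1 : ℤ) := by
    intro i
    show (W (cj (yy ^ ((i : ℕ) : ℤ)) * (cj (yy ^ (((i : ℕ) : ℤ) - 1)))⁻¹)).coeff = _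
    rw [hadd, hWinv, hWcj, hWcj, expx_yy_zpow, expy_yy_zpow, expx_yy_zpow, expy_yy_zpow,
      ← sub_eq_add_neg]
    rfl
  have hWgenV : ∀ i : Fin (2 ^ (k - 1)), (W (genV i)).coeff =
      Finsupp.single ((((i : ℕ) : ℤ)), (0 : ℤ)) (1 : ℤ) -
        Finsupp.single ((((i : ℕ) : ℤ) - 1), (0 : ℤ)) (1 : ℤ) := by
    intro i
    show (W (cj (xx ^ ((i : ℕ) : ℤ)) * (cj (xx ^ (((i : ℕ) : ℤ) - 1)))⁻¹)).coeff = _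
    rw [hadd, hWinv, hWcj, hWcj, expx_xx_zpow, expy_xx_zpow, expx_xx_zpow, expy_xx_zpow,
      ← sub_eq_add_neg]
    rfl
  have hsum_pair : ∀ (F : ℤ × ℤ → ℤ → ZMod (2 ^ k)) (p q : ℤ × ℤ),
      (∀ r b₁ b₂, F r (b₁ - b₂) = F r b₁ - F r b₂) → (∀ r, F r 0 = 0) →
      Finsupp.sum (Finsupp.single p (1 : ℤ) - Finsupp.single q (1 : ℤ)) F = F p 1 - F q 1 := by
    intro F p q hFsub hF0
    rw [Finsupp.sum_sub_index hFsub, Finsupp.sum_single_index (hF0 p),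
      Finsupp.sum_single_index (hF0 q)]
  have key : ∀ a b : ℕ, a < 2 ^ (k - 1) → b < 2 ^ (k - 1) →
      ((if ((((a : ℤ)) : ZMod (2 ^ k)) - ((b : ℕ) : ZMod (2 ^ k))).val < 2 ^ (k - 1)
          then ((1 : ℤ) : ZMod (2 ^ k)) else -((1 : ℤ) : ZMod (2 ^ k))) -
        if (((((a : ℤ) - 1 : ℤ)) : ZMod (2 ^ k)) - ((b : ℕ) : ZMod (2 ^ k))).val < 2 ^ (k - 1)
          then ((1 : ℤ) : ZMod (2 ^ k)) else -((1 : ℤ) : ZMod (2 ^ k)))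
        = if b = a then 2 else 0 := by
    intro a b ha hb
    have e1 : (((a : ℤ)) : ZMod (2 ^ k)) = ((a : ℕ) : ZMod (2 ^ k)) := by push_cast; ring
    have e2 : ((((a : ℤ) - 1 : ℤ)) : ZMod (2 ^ k)) - ((b : ℕ) : ZMod (2 ^ k)) =
        ((a : ℕ) : ZMod (2 ^ k)) - ((b + 1 : ℕ) : ZMod (2 ^ k)) := by push_cast; ring
    rw [e1, e2]
    simp only [Int.cast_one]
    exact step_eval hnm ha hb
  have hΩgenH : ∀ i : Fin (2 ^ (k - 1)), Ω (genH i) =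
      (Pi.single i (2 : ZMod (2 ^ k)), 0) := by
    intro i
    rw [hΩ (genH i), hWgenH i]
    refine Prod.ext ?_ ?_ <;> funext i' <;> dsimp only
    · refine ((hsum_pair _ _ _ ?_ ?_).trans ?_)
      · intro r b₁ b₂; split <;> push_cast <;> ring
      · intro r; split <;> simp
      · dsimp only
        rw [Pi.single_apply,
          show (if i' = i then (2 : ZMod (2 ^ k)) else 0)
            = if (i' : ℕ) = (i : ℕ) then (2 : ZMod (2 ^ k)) else 0 from by
              simp [Fin.val_inj]]
        exact key (i : ℕ) (i' : ℕ) i.isLt i'.isLt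
    · refine ((hsum_pair _ _ _ ?_ ?_).trans ?_)
      · intro r b₁ b₂; split <;> push_cast <;> ring
      · intro r; split <;> simp
      · dsimp only
        rw [sub_self]
        simp
  have hΩgenV : ∀ i : Fin (2 ^ (k - 1)), Ω (genV i) =
      (0, Pi.single i (2 : ZMod (2 ^ k))) := by
    intro i
    rw [hΩ (genV i), hWgenV i]
    refine Prod.ext ?_ ?_ <;> funext i' <;> dsimp only
    · refine ((hsum_pair _ _ _ ?_ ?_).trans ?_)
      · intro r b₁ b₂; split <;> push_cast <;> ring
      · intro r; split <;> simp
      · dsimp only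
        rw [sub_self]
        simp
    · refine ((hsum_pair _ _ _ ?_ ?_).trans ?_)
      · intro r b₁ b₂; split <;> push_cast <;> ring
      · intro r; split <;> simp
      · dsimp only
        rw [Pi.single_apply,
          show (if i' = i then (2 : ZMod (2 ^ k)) else 0)
            = if (i' : ℕ) = (i : ℕ) then (2 : ZMod (2 ^ k)) else 0 from by
              simp [Fin.val_inj]]
        exact key (i : ℕ) (i' : ℕ) i.isLt i'.isLt

  have hneg2 : ∀ x : ZMod 2, -x = x := by decide
  have hpar1 : ∀ (z : commutator F2) (i : Fin (2 ^ (k - 1))),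
      π ((Ω z).1 i) = (W z).coeff.sum fun _ a => ((a : ℤ) : ZMod 2) := by
    intro z i
    rw [hΩ z]
    dsimp only
    rw [map_finsuppSum]
    refine Finsupp.sum_congr ?_
    intro p _
    split_ifs
    · exact map_intCast π _
    · rw [map_neg, map_intCast]; exact hneg2 _
  have hpar2 : ∀ (z : commutator F2) (i : Fin (2 ^ (k - 1))),
      π ((Ω z).2 i) = (W z).coeff.sum fun _ a => ((a : ℤ) : ZMod 2) := by
    intro z i
    rw [hΩ z]
    dsimp only
    rw [map_finsuppSum]
    refine Finsupp.sum_congr ?_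
    intro p _
    split_ifs
    · exact map_intCast π _
    · rw [map_neg, map_intCast]; exact hneg2 _
  have hcs0 : (W z₀).coeff.sum (fun _ a => ((a : ℤ) : ZMod 2)) = 1 := by
    rw [hWz₀, AddMonoidAlgebra.one_def, AddMonoidAlgebra.coeff_single]
    rw [Finsupp.sum_single_index (by simp)]
    simp
  have hΩadd : ∀ z w : commutator F2, Ω (z * w) = Ω z + Ω w := by
    intro z w
    rw [hΩ (z * w), hΩ z, hΩ w, hadd, AddMonoidAlgebra.coeff_add]
    refine Prod.ext ?_ ?_ <;> funext i <;>
      simp only [Prod.fst_add, Prod.snd_add, Pi.add_apply] <;>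
      exact Finsupp.sum_add_index' (fun p => by split <;> simp)
        (fun p b₁ b₂ => by split <;> push_cast <;> ring)
  have hΩ1 : Ω 1 = 0 := by
    have h := hΩadd 1 1
    rw [one_mul] at h
    have h2 : Ω 1 + 0 = Ω 1 + Ω 1 := by rw [add_zero]; exact h
    exact (add_left_cancel h2).symm
  have hΩneg : ∀ z : commutator F2, Ω z⁻¹ = -Ω z := by
    intro z
    have h := hΩadd z z⁻¹
    rw [mul_inv_cancel, hΩ1] at h
    exact eq_neg_of_add_eq_zero_right h.symm
  let A : AddSubgroup ((Fin (2 ^ (k - 1)) → ZMod (2 ^ k)) × (Fin (2 ^ (k - 1)) → ZMod (2 ^ k))) :=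
    { carrier := Set.range Ω
      zero_mem' := ⟨1, hΩ1⟩
      add_mem' := by rintro a b ⟨z, rfl⟩ ⟨w, rfl⟩; exact ⟨z * w, hΩadd z w⟩
      neg_mem' := by rintro a ⟨z, rfl⟩; exact ⟨z⁻¹, hΩneg z⟩ }

  have comp : ∀ (c : Fin (2 ^ (k - 1)) → ℕ) (j : Fin (2 ^ (k - 1))),
      (∑ i : Fin (2 ^ (k - 1)),
          c i • (Pi.single i (2 : ZMod (2 ^ k)) : Fin (2 ^ (k - 1)) → ZMod (2 ^ k)) j)
        = ((c j * 2 : ℕ) : ZMod (2 ^ k)) := by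
    intro c j
    have h1 : ∀ i : Fin (2 ^ (k - 1)),
        c i • (Pi.single i (2 : ZMod (2 ^ k)) : Fin (2 ^ (k - 1)) → ZMod (2 ^ k)) j
        = if j = i then ((c i * 2 : ℕ) : ZMod (2 ^ k)) else 0 := by
      intro i
      rw [Pi.single_apply]
      split_ifs
      · rw [nsmul_eq_mul]; push_cast; ring
      · simp
    rw [Finset.sum_congr rfl fun i _ => h1 i, Finset.sum_ite_eq]
    simp
  have hvalrec : ∀ c : ZMod (2 ^ k), 2 ∣ c.val → ((c.val / 2 * 2 : ℕ) : ZMod (2 ^ k)) = c := by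
    intro c h
    rw [Nat.div_mul_cancel h]
    exact ZMod.natCast_rightInverse c
  have heven : ∀ w : (Fin (2 ^ (k - 1)) → ZMod (2 ^ k)) × (Fin (2 ^ (k - 1)) → ZMod (2 ^ k)),
      (∀ i, 2 ∣ (w.1 i).val) → (∀ i, 2 ∣ (w.2 i).val) → w ∈ A := by
    intro w h1 h2
    have hw : w = (∑ i : Fin (2 ^ (k - 1)), ((w.1 i).val / 2) •
          ((Pi.single i (2 : ZMod (2 ^ k)), 0) :
            (Fin (2 ^ (k - 1)) → ZMod (2 ^ k)) × (Fin (2 ^ (k - 1)) → ZMod (2 ^ k))))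
        + ∑ i : Fin (2 ^ (k - 1)), ((w.2 i).val / 2) •
          ((0, Pi.single i (2 : ZMod (2 ^ k))) :
            (Fin (2 ^ (k - 1)) → ZMod (2 ^ k)) × (Fin (2 ^ (k - 1)) → ZMod (2 ^ k))) := by
      refine Prod.ext ?_ ?_ <;> funext j
      · simp only [Prod.fst_add, Prod.fst_sum, Prod.smul_fst, Prod.smul_snd, smul_zero,
          Finset.sum_const_zero, add_zero, zero_add, Pi.add_apply, Finset.sum_apply,
          Pi.smul_apply, Pi.zero_apply]
        rw [comp]
        exact (hvalrec _ (h1 j)).symm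
      · simp only [Prod.snd_add, Prod.snd_sum, Prod.smul_fst, Prod.smul_snd, smul_zero,
          Finset.sum_const_zero, add_zero, zero_add, Pi.add_apply, Finset.sum_apply,
          Pi.smul_apply, Pi.zero_apply]
        rw [comp]
        exact (hvalrec _ (h2 j)).symm
    rw [hw]
    refine A.add_mem (AddSubgroup.sum_mem A fun i _ => AddSubgroup.nsmul_mem A ?_ _)
      (AddSubgroup.sum_mem A fun i _ => AddSubgroup.nsmul_mem A ?_ _)
    · exact ⟨genH i, hΩgenH i⟩
    · exact ⟨genV i, hΩgenV i⟩
  set f := prodHom π i0 with hfdef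
  have hrange_sub : ∀ w, w ∈ A → w ∈ f.ker := by
    rintro w ⟨z, rfl⟩
    rw [AddMonoidHom.mem_ker, hfdef, prodHom_apply]
    refine Prod.ext ?_ ?_ <;> funext i
    · show π ((Ω z).1 i) - π ((Ω z).1 i0) = 0
      rw [hpar1 z i, hpar1 z i0, sub_self]
    · show π ((Ω z).2 i) - π ((Ω z).1 i0) = 0
      rw [hpar2 z i, hpar1 z i0, sub_self]
  have hdvd_of : ∀ c : ZMod (2 ^ k), π c = 0 → 2 ∣ c.val := by
    intro c h
    rw [hπdef, ZMod.castHom_apply, ← ZMod.natCast_val] at h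
    exact (ZMod.natCast_eq_zero_iff _ _).mp h
  have hker_sub : ∀ w, w ∈ f.ker → w ∈ A := by
    intro w hw
    rw [AddMonoidHom.mem_ker, hfdef, prodHom_apply] at hw
    have hw1 : ∀ i, π (w.1 i) = π (w.1 i0) := by
      intro i
      have h := congrFun (congrArg Prod.fst hw) i
      simpa [sub_eq_zero] using h
    have hw2 : ∀ i, π (w.2 i) = π (w.1 i0) := by
      intro i
      have h := congrFun (congrArg Prod.snd hw) i
      simpa [sub_eq_zero] using h
    have h01 : π (w.1 i0) = 0 ∨ π (w.1 i0) = 1 := by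
      have hall : ∀ x : ZMod 2, x = 0 ∨ x = 1 := by decide
      exact hall _
    rcases h01 with h | h
    · exact heven w (fun i => hdvd_of _ (by rw [hw1 i, h])) (fun i => hdvd_of _ (by rw [hw2 i, h]))
    · have hz₀A : Ω z₀ ∈ A := ⟨z₀, rfl⟩
      have hsubA : w - Ω z₀ ∈ A := by
        refine heven _ (fun i => hdvd_of _ ?_) (fun i => hdvd_of _ ?_)
        · have e : (w - Ω z₀).1 i = w.1 i - (Ω z₀).1 i := rfl
          rw [e, map_sub, hw1 i, h, hpar1 z₀ i, hcs0, sub_self]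
        · have e : (w - Ω z₀).2 i = w.2 i - (Ω z₀).2 i := rfl
          rw [e, map_sub, hw2 i, h, hpar2 z₀ i, hcs0, sub_self]
      have hA := A.add_mem hsubA hz₀A
      simpa using hA
  have hsetq : Set.range Ω = (f.ker : Set _) :=
    Set.ext fun w => ⟨fun hw => hrange_sub w hw, fun hw => hker_sub w hw⟩
  rw [hsetq]
  show Nat.card f.ker = 2 * (2 ^ (k - 1)) ^ 2 ^ k
  have hcardV : Nat.card ((Fin (2 ^ (k - 1)) → ZMod (2 ^ k)) × (Fin (2 ^ (k - 1)) → ZMod (2 ^ k)))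
      = 2 ^ (k * 2 ^ k) := by
    rw [Nat.card_eq_fintype_card, Fintype.card_prod, Fintype.card_fun, ZMod.card, Fintype.card_fin,
      ← pow_add, ← pow_mul]
    congr 1
    congr 1
    omega
  have hcardQ : Nat.card ((Fin (2 ^ (k - 1)) → ZMod 2) × (Fin (2 ^ (k - 1)) → ZMod 2))
      = 2 ^ (2 ^ k) := by
    rw [Nat.card_eq_fintype_card, Fintype.card_prod, Fintype.card_fun, ZMod.card, Fintype.card_fin,
      ← pow_add]
    congr 1
    omega
  have hevrange : Nat.card (evalHom i0).range = 2 := by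
    have htop : (evalHom i0).range = ⊤ := by
      rw [AddMonoidHom.range_eq_top]
      intro t
      exact ⟨(fun _ => t, 0), rfl⟩
    rw [htop]
    exact (Nat.card_congr AddSubgroup.topEquiv.toEquiv).trans (Nat.card_zmod 2)
  have hfrange : f.range = (evalHom i0).ker := by
    ext p
    constructor
    · rintro ⟨w, rfl⟩
      rw [AddMonoidHom.mem_ker, hfdef]
      show π (w.1 i0) - π (w.1 i0) = 0
      exact sub_self _
    · intro hp
      rw [AddMonoidHom.mem_ker, evalHom_apply] at hp
      refine ⟨((fun i => (((p.1 i).val : ℕ) : ZMod (2 ^ k))),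
        fun i => (((p.2 i).val : ℕ) : ZMod (2 ^ k))), ?_⟩
      rw [hfdef, prodHom_apply]
      have hb : ∀ c : ZMod 2, π (((c.val : ℕ)) : ZMod (2 ^ k)) = c := by
        intro c
        rw [map_natCast]
        exact ZMod.natCast_rightInverse c
      refine Prod.ext ?_ ?_ <;> funext i <;> dsimp only
      · rw [hb, hb, hp, sub_zero]
      · rw [hb, hb, hp, sub_zero]
  have E1 := card_eq_range_mul_ker f
  have E2 := card_eq_range_mul_ker (evalHom i0)
  rw [hcardQ, hevrange] at E2
  rw [hcardV, hfrange] at E1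
  have hkk : 2 ^ k + (k - 1) * 2 ^ k = k * 2 ^ k := by
    have h1 : k - 1 + 1 = k := by omega
    calc 2 ^ k + (k - 1) * 2 ^ k = (k - 1 + 1) * 2 ^ k := by ring
      _ = k * 2 ^ k := by rw [h1]
  have c4 : 2 ^ (2 ^ k) * Nat.card f.ker = 2 * 2 ^ (k * 2 ^ k) := by
    rw [E2, E1]; ring
  have c5 : 2 ^ (2 ^ k) * (2 * (2 ^ (k - 1)) ^ 2 ^ k) = 2 * 2 ^ (k * 2 ^ k) := by
    rw [← pow_mul, ← hkk, pow_add]; ring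
  exact Nat.eq_of_mul_eq_mul_left (by positivity) (c4.trans c5.symm)
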